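/- The z-deformed exponential exp_C̃ = Σ_{i≥0} (z^i/D_i) τ^i is injective on 𝕃_∞ = L ⊗_K 𝔽_q(z)((1/θ)), i.e., its kernel as an 𝔽_q(z)-linear map 𝕃_∞ → 𝕃_∞ is zero. -/

import Mathlib

open Polynomial

/-- `f` tends to `s` with respect to the (additive, `ℚ`-valued) valuation `v`. -/
def VTendsto {E : Type*} [Ring E] (v : E → ℚ) (f : ℕ → E) (s : E) : Prop :=
  ∀ r : ℚ, ∃ N : ℕ, ∀ n : ℕ, N ≤ n → (f n - s = 0 ∨ r ≤ v (f n - s))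

namespace ZDef

variable {𝔼 : Type*} [Field 𝔼]

def VMul (v : 𝔼 → ℚ) : Prop := ∀ x y : 𝔼, x ≠ 0 → y ≠ 0 → v (x * y) = v x + v y
def VAdd' (v : 𝔼 → ℚ) : Prop := ∀ x y : 𝔼, x ≠ 0 → y ≠ 0 → x + y ≠ 0 → min (v x) (v y) ≤ v (x + y)
def VGe (v : 𝔼 → ℚ) (B : ℚ) (u : 𝔼) : Prop := u = 0 ∨ B ≤ v u

variable {v : 𝔼 → ℚ}

theorem v_one (hm : VMul v) : v 1 = 0 := by
  have h := hm 1 1 one_ne_zero one_ne_zero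
  simp only [mul_one] at h; linarith

theorem v_negone (hm : VMul v) : v (-1 : 𝔼) = 0 := by
  have h := hm (-1 : 𝔼) (-1) (by simp) (by simp)
  simp only [neg_mul_neg, one_mul] at h
  have := v_one hm; linarith

theorem v_neg (hm : VMul v) {x : 𝔼} (hx : x ≠ 0) : v (-x) = v x := by
  have h := hm (-1 : 𝔼) x (by simp) hx
  rw [neg_one_mul] at h
  rw [h, v_negone hm]; ring

theorem v_pow (hm : VMul v) {x : 𝔼} (hx : x ≠ 0) (n : ℕ) : v (x ^ n) = n * v x := by
  induction n with
  | zero => simp [v_one hm]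
  | succ n ih =>
    rw [pow_succ, hm _ _ (pow_ne_zero _ hx) hx, ih]
    push_cast; ring

theorem v_div (hm : VMul v) {x y : 𝔼} (hx : x ≠ 0) (hy : y ≠ 0) :
    v (x / y) = v x - v y := by
  have h := hm y (x / y) hy (div_ne_zero hx hy)
  rw [mul_div_cancel₀ _ hy] at h
  linarith

theorem v_prod (hm : VMul v) {ι : Type*} (s : Finset ι) (f : ι → 𝔼)
    (h : ∀ i ∈ s, f i ≠ 0) : v (∏ i ∈ s, f i) = ∑ i ∈ s, v (f i) := by
  induction s using Finset.cons_induction with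
  | empty => simp [v_one hm]
  | cons a s ha ih =>
    rw [Finset.prod_cons, Finset.sum_cons,
      hm _ _ (h a (Finset.mem_cons_self a s)) (Finset.prod_ne_zero_iff.2 fun i hi => h i (Finset.mem_cons_of_mem hi)),
      ih fun i hi => h i (Finset.mem_cons_of_mem hi)]

theorem vge_mono {B B' : ℚ} {u : 𝔼} (h : VGe v B u) (hle : B' ≤ B) : VGe v B' u :=
  h.imp id fun h2 => le_trans hle h2

theorem vge_add (ha : VAdd' v) {B : ℚ} {x y : 𝔼} (hx : VGe v B x) (hy : VGe v B y) :
    VGe v B (x + y) := by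
  rcases hx with rfl | hx
  · simpa using hy
  rcases hy with rfl | hy
  · simpa [VGe] using Or.inr hx
  by_cases hx0 : x = 0
  · exact Or.inr (by simpa [hx0] using hy)
  by_cases hy0 : y = 0
  · exact Or.inr (by simpa [hy0] using hx)
  by_cases hxy : x + y = 0
  · exact Or.inl hxy
  · exact Or.inr (le_trans (le_min hx hy) (ha x y hx0 hy0 hxy))

theorem vge_neg (hm : VMul v) {B : ℚ} {x : 𝔼} (hx : VGe v B x) : VGe v B (-x) := by
  rcases hx with rfl | hx
  · exact Or.inl (by simp)
  by_cases hx0 : x = 0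
  · exact Or.inl (by simp [hx0])
  · exact Or.inr (by rw [v_neg hm hx0]; exact hx)

theorem vge_sub (hm : VMul v) (ha : VAdd' v) {B : ℚ} {x y : 𝔼}
    (hx : VGe v B x) (hy : VGe v B y) : VGe v B (x - y) := by
  rw [sub_eq_add_neg]; exact vge_add ha hx (vge_neg hm hy)

theorem vge_sum (ha : VAdd' v) {ι : Type*} {B : ℚ} (s : Finset ι) (f : ι → 𝔼)
    (h : ∀ i ∈ s, VGe v B (f i)) : VGe v B (∑ i ∈ s, f i) := by
  induction s using Finset.cons_induction with
  | empty => exact Or.inl (by simp)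
  | cons a s ha' ih =>
    rw [Finset.sum_cons]
    exact vge_add ha (h a (Finset.mem_cons_self a s))
      (ih fun i hi => h i (Finset.mem_cons_of_mem hi))

theorem eq_zero_of_forall_vge {u : 𝔼} (h : ∀ r : ℚ, VGe v r u) : u = 0 := by
  by_contra hu
  rcases h (v u + 1) with rfl | h2
  · exact hu rfl
  · linarith

theorem v_strict (hm : VMul v) (ha : VAdd' v) {x y : 𝔼} (hx : x ≠ 0) (hy : y ≠ 0)
    (hlt : v x < v y) : x + y ≠ 0 ∧ v (x + y) = v x := by
  have hxy : x + y ≠ 0 := by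
    intro h
    have h2 : y = -x := eq_neg_of_add_eq_zero_right h
    rw [h2, v_neg hm hx] at hlt
    exact lt_irrefl _ hlt
  refine ⟨hxy, le_antisymm ?_ ?_⟩
  · have h2 : v x = v ((x + y) + (-y)) := by norm_num
    have h3 := ha (x + y) (-y) hxy (neg_ne_zero.2 hy) (by simpa using hx)
    rw [← h2, v_neg hm hy] at h3
    rcases le_or_gt (v (x + y)) (v x) with h4 | h4
    · exact h4
    · exfalso
      rcases min_le_iff.1 h3 with h5 | h5 <;> linarith
  · have h3 := ha x y hx hy hxy
    exact le_trans (le_min le_rfl hlt.le) h3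

theorem vt_congr {f g : ℕ → 𝔼} {s : 𝔼} (h : ∀ n, f n = g n) (hf : VTendsto v f s) :
    VTendsto v g s := by
  intro r
  obtain ⟨N, hN⟩ := hf r
  exact ⟨N, fun n hn => by rw [← h n]; exact hN n hn⟩

theorem vt_vge (ha : VAdd' v) (hm : VMul v) {f : ℕ → 𝔼} {s : 𝔼} {B : ℚ} {N₀ : ℕ}
    (hf : VTendsto v f s) (h : ∀ n, N₀ ≤ n → VGe v B (f n)) : VGe v B s := by
  by_cases hs : s = 0
  · exact Or.inl hs
  obtain ⟨N, hN⟩ := hf (max B (v s + 1))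
  set n := max N N₀ with hn
  have hd := hN n (le_max_left _ _)
  have hfn := h n (le_max_right _ _)
  by_cases hfs : f n - s = 0
  · have : f n = s := by linear_combination hfs
    rcases hfn with h0 | h0
    · exact absurd (this ▸ h0) hs
    · exact Or.inr (this ▸ h0)
  rcases hd with h0 | hd
  · exact absurd h0 hfs
  have hdge : B ≤ v (f n - s) := le_trans (le_max_left _ _) hd
  have hdge2 : v s + 1 ≤ v (f n - s) := le_trans (le_max_right _ _) hd
  by_cases hfn0 : f n = 0
  · have : v (f n - s) = v s := by rw [hfn0, zero_sub, v_neg hm hs]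
    linarith
  · have hfnB : B ≤ v (f n) := hfn.resolve_left hfn0
    have hs2 : f n + (-(f n - s)) = s := by ring
    have h3 := ha (f n) (-(f n - s)) hfn0 (neg_ne_zero.2 hfs) (by rw [hs2]; exact hs)
    rw [hs2, v_neg hm hfs] at h3
    exact Or.inr (le_trans (le_min hfnB hdge) h3)

theorem vt_unique (hm : VMul v) (ha : VAdd' v) {f : ℕ → 𝔼} {s t : 𝔼}
    (h1 : VTendsto v f s) (h2 : VTendsto v f t) : s = t := by
  have key : ∀ r : ℚ, VGe v r (s - t) := by
    intro r
    obtain ⟨N1, hN1⟩ := h1 r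
    obtain ⟨N2, hN2⟩ := h2 r
    set n := max N1 N2
    have d1 : VGe v r (f n - s) := hN1 n (le_max_left _ _)
    have d2 : VGe v r (f n - t) := hN2 n (le_max_right _ _)
    have : s - t = (f n - t) - (f n - s) := by ring
    rw [this]
    exact vge_sub hm ha d2 d1
  exact sub_eq_zero.1 (eq_zero_of_forall_vge key)

theorem vt_const (s : 𝔼) : VTendsto v (fun _ => s) s := by
  intro r; exact ⟨0, fun n _ => Or.inl (by simp)⟩

theorem vt_eventually_const (hm : VMul v) (ha : VAdd' v) {f : ℕ → 𝔼} {s x : 𝔼}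
    (h : VTendsto v f s) (hc : ∀ n, 1 ≤ n → f n = x) : s = x := by
  have h2 : VTendsto v f x := by
    intro r; exact ⟨1, fun n hn => Or.inl (by rw [hc n hn]; ring)⟩
  exact vt_unique hm ha h h2

theorem vt_add (hm : VMul v) (ha : VAdd' v) {f g : ℕ → 𝔼} {s t : 𝔼}
    (hf : VTendsto v f s) (hg : VTendsto v g t) :
    VTendsto v (fun n => f n + g n) (s + t) := by
  intro r
  obtain ⟨N1, hN1⟩ := hf r
  obtain ⟨N2, hN2⟩ := hg r
  refine ⟨max N1 N2, fun n hn => ?_⟩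
  have d1 := hN1 n (le_trans (le_max_left _ _) hn)
  have d2 := hN2 n (le_trans (le_max_right _ _) hn)
  have : f n + g n - (s + t) = (f n - s) + (g n - t) := by ring
  rw [this]
  exact vge_add ha d1 d2

theorem vt_mul (hm : VMul v) {f : ℕ → 𝔼} {s : 𝔼} (w : 𝔼) (hf : VTendsto v f s) :
    VTendsto v (fun n => w * f n) (w * s) := by
  by_cases hw : w = 0
  · intro r; exact ⟨0, fun n _ => Or.inl (by rw [hw]; ring)⟩
  intro r
  obtain ⟨N, hN⟩ := hf (r - v w)
  refine ⟨N, fun n hn => ?_⟩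
  have heq : w * f n - w * s = w * (f n - s) := by ring
  by_cases hd : f n - s = 0
  · exact Or.inl (by rw [heq, hd, mul_zero])
  rcases hN n hn with h0 | h0
  · exact absurd h0 hd
  · right
    rw [heq, hm w _ hw hd]
    linarith

theorem vt_sub_const (hm : VMul v) {f : ℕ → 𝔼} {s : 𝔼} (C : 𝔼) (hf : VTendsto v f s) :
    VTendsto v (fun n => f n - C) (s - C) := by
  intro r
  obtain ⟨N, hN⟩ := hf r
  refine ⟨N, fun n hn => ?_⟩
  have : f n - C - (s - C) = f n - s := by ring
  rw [this]
  exact hN n hn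

end ZDef

open ZDef

/-- **Injectivity of the `z`-deformed Carlitz exponential on `𝕃_∞`.**
A component of `𝕃_∞ = L ⊗_K 𝔽_q(z)((1/θ))` is modeled by a valued field `𝔼`
(valuation `v`, `v θ = -1`), containing the completion `E` of the corresponding
component of `L ⊗ K_∞` and the element `z`, such that the `𝔽_q(z)`-span of the Tate
algebra `E⟨z⟩` is `v`-dense in `𝔼` and carries the Gauss norm; `τ` is the continuous
`𝔽_q(z)`-algebra endomorphism restricting to `x ↦ x^q` on `E`.  Then the
exponential `exp_C̃ (x) = ∑ z^i τ^i(x)/D_i` is injective. -/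
theorem zdeformation_exponential_injective
    (F : Type*) [Field F] [Fintype F] (q : ℕ) (hq : q = Fintype.card F)
    (𝔼 : Type*) [Field 𝔼] [Algebra F 𝔼] (v : 𝔼 → ℚ)
    (hv_mul : ∀ x y : 𝔼, x ≠ 0 → y ≠ 0 → v (x * y) = v x + v y)
    (hv_add : ∀ x y : 𝔼, x ≠ 0 → y ≠ 0 → x + y ≠ 0 → min (v x) (v y) ≤ v (x + y))
    (E : Subfield 𝔼) (θ z : 𝔼) (hθE : θ ∈ E) (hθ : v θ = -1)
    (hz : ∀ g : Polynomial F, g ≠ 0 → v (Polynomial.aeval z g) = 0)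
    (τ : 𝔼 →+* 𝔼)
    (hτE : ∀ x ∈ E, τ x ∈ E ∧ τ x = x ^ q)
    (hτz : τ z = z)
    (hτF : ∀ γ : F, τ (algebraMap F 𝔼 γ) = algebraMap F 𝔼 γ)
    (hτv : ∀ x : 𝔼, x ≠ 0 → v (τ x) = q * v x)
    (hdense : ∀ x : 𝔼, ∀ r : ℚ, ∃ (N : ℕ) (lam : ℕ → 𝔼) (g : Polynomial F),
      (∀ j, lam j ∈ E) ∧ g ≠ 0 ∧
      (x * Polynomial.aeval z g - ∑ j ∈ Finset.range N, lam j * z ^ j = 0 ∨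
        r ≤ v (x * Polynomial.aeval z g - ∑ j ∈ Finset.range N, lam j * z ^ j)))
    (hGauss : ∀ (N : ℕ) (lam : ℕ → 𝔼), (∀ j, lam j ∈ E) →
      ∀ j < N, lam j ≠ 0 → v (∑ j ∈ Finset.range N, lam j * z ^ j) ≤ v (lam j))
    (hzero : ∀ (N : ℕ) (lam : ℕ → 𝔼), (∀ j, lam j ∈ E) →
      (∑ j ∈ Finset.range N, lam j * z ^ j) = 0 → ∀ j < N, lam j = 0)
    (D : ℕ → 𝔼)
    (hD : ∀ i : ℕ, D i = ∏ k ∈ Finset.range i, (θ ^ q ^ i - θ ^ q ^ k))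
    (expC : 𝔼 → 𝔼)
    (hexp : ∀ x : 𝔼,
      VTendsto v (fun N => ∑ i ∈ Finset.range N, z ^ i * (⇑τ)^[i] x / D i) (expC x)) :
    Function.Injective expC := by
  classical
  have hm : VMul v := hv_mul
  have ha : VAdd' v := hv_add
  have hq2 : 2 ≤ q := by rw [hq]; exact Fintype.one_lt_card
  have hqQ : (1:ℚ) < (q:ℚ) := by exact_mod_cast hq2
  -- degenerate branches : expC = id
  have hid : (∀ (x : 𝔼) (n : ℕ), 1 ≤ n →
      (∑ i ∈ Finset.range n, z ^ i * (⇑τ)^[i] x / D i) = x) → Function.Injective expC := by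
    intro h a b hab
    have ea : expC a = a := vt_eventually_const hm ha (hexp a) (h a)
    have eb : expC b = b := vt_eventually_const hm ha (hexp b) (h b)
    rw [ea, eb] at hab
    exact hab
  by_cases hθ0 : θ = 0
  · apply hid
    intro x n hn
    rw [Finset.sum_eq_single_of_mem 0 (Finset.mem_range.2 hn) ?_]
    · simp [hD]
    · intro i _ hi0
      have hDi : D i = 0 := by
        rw [hD]
        apply Finset.prod_eq_zero (Finset.mem_range.2 (Nat.pos_of_ne_zero hi0))
        rw [hθ0, zero_pow (pow_ne_zero _ (by omega : q ≠ 0)),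
          zero_pow (pow_ne_zero _ (by omega : q ≠ 0)), sub_zero]
      rw [hDi, div_zero]
  by_cases hz0 : z = 0
  · apply hid
    intro x n hn
    rw [Finset.sum_eq_single_of_mem 0 (Finset.mem_range.2 hn) ?_]
    · simp [hD]
    · intro i _ hi0
      rw [hz0, zero_pow hi0, zero_mul, zero_div]
  -- main branch: θ ≠ 0, z ≠ 0
  have hq0 : q ≠ 0 := by omega
  have hvz : v z = 0 := by
    have := hz X X_ne_zero
    simpa using this
  -- τ-iterate lemmas
  have hiter_add : ∀ (i : ℕ) (x y : 𝔼), (⇑τ)^[i] (x + y) = (⇑τ)^[i] x + (⇑τ)^[i] y := by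
    intro i
    induction i with
    | zero => simp
    | succ i ih => intro x y; rw [Function.iterate_succ_apply, map_add]; exact ih _ _
  have hiter_zero : ∀ i : ℕ, (⇑τ)^[i] (0:𝔼) = 0 := by
    intro i
    induction i with
    | zero => simp
    | succ i ih => rw [Function.iterate_succ_apply, map_zero]; exact ih
  have hτne : ∀ x : 𝔼, x ≠ 0 → τ x ≠ 0 := by
    intro x hx h
    exact hx (τ.injective (by rw [h, map_zero]))
  have hiter_ne : ∀ (i : ℕ) (x : 𝔼), x ≠ 0 → (⇑τ)^[i] x ≠ 0 := by
    intro i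
    induction i with
    | zero => intro x hx; simpa using hx
    | succ i ih => intro x hx; rw [Function.iterate_succ_apply]; exact ih _ (hτne x hx)
  have hiter_v : ∀ (i : ℕ) (x : 𝔼), x ≠ 0 → v ((⇑τ)^[i] x) = (q:ℚ)^i * v x := by
    intro i
    induction i with
    | zero => intro x hx; simp
    | succ i ih =>
      intro x hx
      rw [Function.iterate_succ_apply', hτv _ (hiter_ne i x hx), ih x hx, pow_succ]
      ring
  have hfix : ∀ w : 𝔼, τ w = w → ∀ i : ℕ, (⇑τ)^[i] w = w := by
    intro w hw i
    induction i with
    | zero => simp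
    | succ i ih => rw [Function.iterate_succ_apply, hw]; exact ih
  have hiter_mulfix : ∀ (w : 𝔼), τ w = w → ∀ (i : ℕ) (x : 𝔼),
      (⇑τ)^[i] (w * x) = w * (⇑τ)^[i] x := by
    intro w hw i
    induction i with
    | zero => simp
    | succ i ih =>
      intro x
      rw [Function.iterate_succ_apply, map_mul, hw, ih (τ x), Function.iterate_succ_apply]
  have hiterE : ∀ (i : ℕ) (x : 𝔼), x ∈ E → (⇑τ)^[i] x = x ^ (q ^ i) := by
    intro i
    induction i with
    | zero => intro x _; simp
    | succ i ih =>
      intro x hx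
      rw [Function.iterate_succ_apply', ih x hx, (hτE _ (pow_mem hx _)).2,
        ← pow_mul, ← pow_succ]
  have hτaeval : ∀ gg : Polynomial F, τ (aeval z gg) = aeval z gg := by
    intro gg
    induction gg using Polynomial.induction_on' with
    | add p r hp hr => rw [map_add, map_add, hp, hr]
    | monomial n a =>
      rw [aeval_monomial, map_mul, map_pow, hτz, hτF]
  -- valuation of D
  have hvD : ∀ i : ℕ, D i ≠ 0 ∧ v (D i) = -((i:ℚ) * (q:ℚ)^i) := by
    intro i
    have hθpow : ∀ m : ℕ, v (θ ^ q ^ m) = -(q:ℚ)^m := by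
      intro m
      rw [v_pow hm hθ0, hθ]
      push_cast; ring
    have hfac : ∀ k ∈ Finset.range i, (θ ^ q ^ i - θ ^ q ^ k) ≠ 0 ∧
        v (θ ^ q ^ i - θ ^ q ^ k) = -(q:ℚ)^i := by
      intro k hk
      have hki : k < i := Finset.mem_range.1 hk
      have hlt : v (θ ^ q ^ i) < v (-(θ ^ q ^ k)) := by
        rw [v_neg hm (pow_ne_zero _ hθ0), hθpow, hθpow, neg_lt_neg_iff]
        exact pow_lt_pow_right₀ hqQ hki
      have := v_strict hm ha (pow_ne_zero _ hθ0) (neg_ne_zero.2 (pow_ne_zero _ hθ0)) hlt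
      rw [← sub_eq_add_neg] at this
      exact ⟨this.1, by rw [this.2, hθpow]⟩
    constructor
    · rw [hD]
      exact Finset.prod_ne_zero_iff.2 fun k hk => (hfac k hk).1
    · rw [hD, v_prod hm _ _ fun k hk => (hfac k hk).1]
      rw [Finset.sum_congr rfl fun k hk => (hfac k hk).2]
      rw [Finset.sum_const, Finset.card_range, nsmul_eq_mul]
      ring
  -- term valuation
  have htermv : ∀ (i : ℕ) (u : 𝔼), u ≠ 0 →
      v (z ^ i * (⇑τ)^[i] u / D i) = (q:ℚ)^i * (v u + i) := by
    intro i u hu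
    rw [v_div hm (mul_ne_zero (pow_ne_zero _ hz0) (hiter_ne i u hu)) (hvD i).1,
      hm _ _ (pow_ne_zero _ hz0) (hiter_ne i u hu), v_pow hm hz0, hvz,
      hiter_v i u hu, (hvD i).2]
    ring
  -- exp algebra
  have hexp_zero : expC 0 = 0 := by
    apply vt_eventually_const hm ha (hexp 0)
    intro n _
    apply Finset.sum_eq_zero
    intro i _
    rw [hiter_zero, mul_zero, zero_div]
  have hexp_add : ∀ x y : 𝔼, expC (x + y) = expC x + expC y := by
    intro x y
    apply vt_unique hm ha (hexp (x+y))
    apply vt_congr (g := fun n => (∑ i ∈ Finset.range n, z ^ i * (⇑τ)^[i] (x+y) / D i)) ?_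
      (vt_add hm ha (hexp x) (hexp y))
    intro n
    rw [← Finset.sum_add_distrib]
    apply Finset.sum_congr rfl
    intro i _
    rw [hiter_add]
    ring
  have hexp_scale : ∀ w x : 𝔼, τ w = w → expC (w * x) = w * expC x := by
    intro w x hw
    apply vt_unique hm ha (hexp (w*x))
    apply vt_congr (g := fun n => (∑ i ∈ Finset.range n, z ^ i * (⇑τ)^[i] (w*x) / D i)) ?_
      (vt_mul hm w (hexp x))
    intro n
    rw [Finset.mul_sum]
    apply Finset.sum_congr rfl
    intro i _
    rw [hiter_mulfix w hw]
    ring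
  have hexp_sum : ∀ (s : Finset ℕ) (f : ℕ → 𝔼),
      expC (∑ j ∈ s, f j) = ∑ j ∈ s, expC (f j) := by
    intro s f
    induction s using Finset.cons_induction with
    | empty => simpa using hexp_zero
    | cons a s ha' ih => rw [Finset.sum_cons, Finset.sum_cons, hexp_add, ih]
  have hexp_vge : ∀ (u : 𝔼) (B : ℚ), 0 ≤ B → VGe v B u → VGe v B (expC u) := by
    intro u B hB hu
    rcases hu with rfl | hvu
    · rw [hexp_zero]; exact Or.inl rfl
    by_cases hu0 : u = 0
    · rw [hu0, hexp_zero]; exact Or.inl rfl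
    apply vt_vge ha hm (hexp u) (N₀ := 0)
    intro n _
    apply vge_sum ha
    intro i _
    right
    rw [htermv i u hu0]
    have h1 : (1:ℚ) ≤ (q:ℚ)^i := one_le_pow₀ hqQ.le
    have hi0 : (0:ℚ) ≤ (i:ℚ) := Nat.cast_nonneg i
    have h2 : (0:ℚ) ≤ v u + i := by linarith
    calc B ≤ v u := hvu
    _ ≤ v u + i := by linarith
    _ ≤ (q:ℚ)^i * (v u + i) := le_mul_of_one_le_left h2 h1
  -- nonvanishing of polynomials in z
  have hGne : ∀ gg : Polynomial F, gg ≠ 0 → aeval z gg ≠ 0 := by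
    intro gg hgg hroot
    have hint : IsIntegral F z := (IsAlgebraic.isIntegral ⟨gg, hgg, hroot⟩)
    haveI : Module.Finite F (Algebra.adjoin F ({z} : Set 𝔼)) :=
      Module.Finite.iff_fg.2 hint.fg_adjoin_singleton
    haveI : Finite (Algebra.adjoin F ({z} : Set 𝔼)) := Module.finite_of_finite F
    have hzmem : z ∈ Algebra.adjoin F ({z} : Set 𝔼) := Algebra.subset_adjoin rfl
    obtain ⟨m, n, hmn, heq⟩ := Finite.exists_ne_map_eq_of_infinite
      (fun k : ℕ => (⟨z ^ k, pow_mem hzmem k⟩ : Algebra.adjoin F ({z} : Set 𝔼)))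
    have hpow : z ^ m = z ^ n := congrArg Subtype.val heq
    -- get k ≥ 1 with z ^ k = 1
    have hzk : ∃ k : ℕ, 1 ≤ k ∧ z ^ k = 1 := by
      have key : ∀ m n : ℕ, m < n → z ^ m = z ^ n → ∃ k : ℕ, 1 ≤ k ∧ z ^ k = 1 := by
        intro m n hlt hpow
        refine ⟨n - m, by omega, ?_⟩
        have : z ^ m * z ^ (n - m) = z ^ m * 1 := by
          rw [mul_one, ← pow_add]
          rw [hpow]
          congr 1
          omega
        exact mul_left_cancel₀ (pow_ne_zero _ hz0) this
      rcases hmn.lt_or_gt with h | h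
      · exact key m n h hpow
      · exact key n m h hpow.symm
    obtain ⟨k, hk1, hzk⟩ := hzk
    set lam0 : ℕ → 𝔼 := fun j => if j = k then 1 else if j = 0 then -1 else 0 with hlam0
    have hlam0E : ∀ j, lam0 j ∈ E := by
      intro j
      rw [hlam0]
      dsimp only
      split_ifs
      · exact one_mem E
      · exact neg_mem (one_mem E)
      · exact zero_mem E
    have hsum0 : ∑ j ∈ Finset.range (k+1), lam0 j * z ^ j = 0 := by
      have hcongr : ∀ j ∈ Finset.range (k+1), lam0 j * z ^ j =
          (if j = k then z ^ k else 0) + (if j = 0 then (-1:𝔼) else 0) := by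
        intro j _
        rw [hlam0]
        dsimp only
        by_cases h1 : j = k
        · have hk0 : k ≠ 0 := by omega
          simp [h1, hk0]
        · by_cases h2 : j = 0
          · simp [h2, (show (0:ℕ) ≠ k by omega)]
          · simp [h1, h2]
      rw [Finset.sum_congr rfl hcongr, Finset.sum_add_distrib,
        Finset.sum_ite_eq' (Finset.range (k+1)) k, Finset.sum_ite_eq' (Finset.range (k+1)) 0]
      rw [if_pos (Finset.mem_range.2 (by omega)), if_pos (Finset.mem_range.2 (by omega)), hzk]
      ring
    have := hzero (k+1) lam0 hlam0E hsum0 0 (by omega)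
    rw [hlam0] at this
    simp only [if_neg (by omega : ¬ (0:ℕ) = k), if_pos rfl] at this
    exact one_ne_zero (neg_eq_zero.1 this)
  -- reduce to kernel
  have hker : ∀ x : 𝔼, expC x = 0 → x = 0 := by
    intro x hx0
    by_contra hxne
    -- core argument
    have hq1 : 1 < q := by omega
    set c := v x with hc
    obtain ⟨M₀, hM₀⟩ := exists_nat_ge (max (c+1) (1-c))
    set M := M₀ + 1 with hMdef
    set R : ℚ := (M:ℚ) with hRdef
    have hM₀R : (M₀:ℚ) ≤ R := by rw [hRdef, hMdef]; push_cast; linarith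
    have hMc1 : c + 1 ≤ R := le_trans (le_trans (le_max_left _ _) hM₀) hM₀R
    have hMc2 : 1 - c ≤ R := le_trans (le_trans (le_max_right _ _) hM₀) hM₀R
    have hR1 : (1:ℚ) ≤ R := by
      rw [hRdef, hMdef]; push_cast
      have : (0:ℚ) ≤ (M₀:ℚ) := Nat.cast_nonneg _
      linarith
    have hR0 : (0:ℚ) ≤ R := by linarith
    have hRc : c < R := by linarith
    obtain ⟨N, lam, g, hlamE, hg, happrox⟩ := hdense x R
    set G := aeval z g with hGdef
    have hGne' : G ≠ 0 := hGne g hg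
    have hvG : v G = 0 := hz g hg
    have hxG : x * G ≠ 0 := mul_ne_zero hxne hGne'
    have hvxG : v (x * G) = c := by rw [hm x G hxne hGne', hvG, hc]; ring
    set S := ∑ j ∈ Finset.range N, lam j * z ^ j with hSdef
    have hεge : VGe v R (x * G - S) := happrox
    have hSprop : S ≠ 0 ∧ v S = c := by
      by_cases hε0 : x * G - S = 0
      · have hSeq : S = x * G := by linear_combination -hε0
        rw [hSeq]; exact ⟨hxG, hvxG⟩
      · have hvε : R ≤ v (x * G - S) := hεge.resolve_left hε0
        have hlt : v (x * G) < v (-(x * G - S)) := by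
          rw [v_neg hm hε0, hvxG]; linarith
        have hstr := v_strict hm ha hxG (neg_ne_zero.2 hε0) hlt
        have hSeq : x * G + -(x * G - S) = S := by ring
        rw [hSeq] at hstr
        exact ⟨hstr.1, by rw [hstr.2, hvxG]⟩
    obtain ⟨hSne, hvS⟩ := hSprop
    have hlam_c : ∀ j, j < N → VGe v c (lam j) := by
      intro j hj
      by_cases h0 : lam j = 0
      · exact Or.inl h0
      · exact Or.inr (by rw [← hvS]; exact hGauss N lam hlamE j hj h0)
    have hexpxG : expC (x * G) = 0 := by
      rw [mul_comm, hexp_scale G x (hτaeval g), hx0, mul_zero]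
    have hexpS : expC S = - expC (x * G - S) := by
      have h1 : expC (S + (x * G - S)) = expC S + expC (x * G - S) := hexp_add _ _
      rw [show S + (x * G - S) = x * G by ring, hexpxG] at h1
      linear_combination -h1
    have hexpε_ge : VGe v R (expC (x * G - S)) := by
      by_cases h0 : x * G - S = 0
      · rw [h0, hexp_zero]; exact Or.inl rfl
      · exact hexp_vge _ R hR0 (Or.inr (hεge.resolve_left h0))
    have hexpS_ge : VGe v R (expC S) := by rw [hexpS]; exact vge_neg hm hexpε_ge
    have hexpS_sum : expC S = ∑ j ∈ Finset.range N, z ^ j * expC (lam j) := by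
      rw [hSdef, hexp_sum]
      apply Finset.sum_congr rfl
      intro j _
      rw [mul_comm (lam j) (z ^ j), hexp_scale (z ^ j) (lam j) (by rw [map_pow, hτz])]
    have htail : ∀ j, j < N → VGe v R (expC (lam j)
        - ∑ i ∈ Finset.range M, z ^ i * (⇑τ)^[i] (lam j) / D i) := by
      intro j hj
      have hvt := vt_sub_const hm (∑ i ∈ Finset.range M, z ^ i * (⇑τ)^[i] (lam j) / D i)
        (hexp (lam j))
      apply vt_vge ha hm hvt (N₀ := M)
      intro K hK
      rw [← Finset.sum_Ico_eq_sub _ hK]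
      apply vge_sum ha
      intro i hi
      have hiM : M ≤ i := (Finset.mem_Ico.1 hi).1
      by_cases h0 : lam j = 0
      · rw [h0, hiter_zero, mul_zero, zero_div]; exact Or.inl rfl
      · right
        rw [htermv i _ h0]
        have hvlam : c ≤ v (lam j) := (hlam_c j hj).resolve_left h0
        have hiq : (i:ℚ) ≤ (q:ℚ)^i := by exact_mod_cast (Nat.lt_pow_self (n := i) hq1).le
        have hMi : R ≤ (i:ℚ) := by rw [hRdef]; exact_mod_cast hiM
        have h1 : (1:ℚ) ≤ v (lam j) + i := by linarith
        have hq0' : (0:ℚ) ≤ (q:ℚ)^i := by positivity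
        calc R ≤ (i:ℚ) := hMi
        _ ≤ (q:ℚ)^i := hiq
        _ = (q:ℚ)^i * 1 := (mul_one _).symm
        _ ≤ (q:ℚ)^i * (v (lam j) + i) := mul_le_mul_of_nonneg_left h1 hq0'
    set A : ℕ → ℕ → 𝔼 := fun j i => lam j ^ q ^ i / D i with hAdef
    set μ : ℕ → 𝔼 := fun n => ∑ i ∈ Finset.range M,
      if i ≤ n ∧ n - i < N then A (n - i) i else 0 with hμdef
    have hDE : ∀ i, D i ∈ E := by
      intro i; rw [hD]
      exact prod_mem fun k _ => sub_mem (pow_mem hθE _) (pow_mem hθE _)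
    have hμE : ∀ n, μ n ∈ E := by
      intro n; rw [hμdef]
      apply sum_mem
      intro i _
      split_ifs
      · exact div_mem (pow_mem (hlamE _) _) (hDE i)
      · exact zero_mem E
    have hinner : ∀ i, i < M → ∀ u : ℕ → 𝔼,
        (∑ n ∈ Finset.range (N + M), if i ≤ n ∧ n - i < N then u (n - i) * z ^ n else 0)
        = ∑ j ∈ Finset.range N, u j * z ^ (i + j) := by
      intro i hiM u
      rw [← Finset.sum_filter]
      have hset : (Finset.range (N+M)).filter (fun n => i ≤ n ∧ n - i < N)
          = (Finset.range N).image (fun j => i + j) := by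
        ext n
        simp only [Finset.mem_filter, Finset.mem_range, Finset.mem_image]
        constructor
        · rintro ⟨h1, h2, h3⟩; exact ⟨n - i, h3, by omega⟩
        · rintro ⟨j, hj, rfl⟩; exact ⟨by omega, by omega, by omega⟩
      rw [hset, Finset.sum_image (fun x _ y _ h => by omega)]
      apply Finset.sum_congr rfl
      intro j _
      have : i + j - i = j := by omega
      rw [this]
    have hreindex : (∑ j ∈ Finset.range N,
          z ^ j * (∑ i ∈ Finset.range M, z ^ i * (⇑τ)^[i] (lam j) / D i))
        = ∑ n ∈ Finset.range (N + M), μ n * z ^ n := by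
      have hL : ∀ j ∈ Finset.range N,
          z ^ j * (∑ i ∈ Finset.range M, z ^ i * (⇑τ)^[i] (lam j) / D i)
          = ∑ i ∈ Finset.range M, A j i * z ^ (i + j) := by
        intro j _
        rw [Finset.mul_sum]
        apply Finset.sum_congr rfl
        intro i _
        rw [hiterE i _ (hlamE j), hAdef]
        dsimp only
        rw [pow_add]
        ring
      have hR' : ∀ n ∈ Finset.range (N + M), μ n * z ^ n
          = ∑ i ∈ Finset.range M, (if i ≤ n ∧ n - i < N then A (n - i) i * z ^ n else 0) := by
        intro n _
        rw [hμdef]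
        dsimp only
        rw [Finset.sum_mul]
        apply Finset.sum_congr rfl
        intro i _
        rw [ite_mul, zero_mul]
      rw [Finset.sum_congr rfl hL, Finset.sum_comm, Finset.sum_congr rfl hR',
        Finset.sum_comm (s := Finset.range (N + M)) (t := Finset.range M)]
      apply Finset.sum_congr rfl
      intro i hi
      exact (hinner i (Finset.mem_range.1 hi) (fun j => A j i)).symm
    have hexpS_split : expC S = (∑ n ∈ Finset.range (N + M), μ n * z ^ n)
        + ∑ j ∈ Finset.range N, z ^ j * (expC (lam j)
          - ∑ i ∈ Finset.range M, z ^ i * (⇑τ)^[i] (lam j) / D i) := by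
      rw [hexpS_sum, ← hreindex, ← Finset.sum_add_distrib]
      apply Finset.sum_congr rfl
      intro j _
      ring
    have htailsum : VGe v R (∑ j ∈ Finset.range N, z ^ j * (expC (lam j)
        - ∑ i ∈ Finset.range M, z ^ i * (⇑τ)^[i] (lam j) / D i)) := by
      apply vge_sum ha
      intro j hj
      by_cases hval : (expC (lam j) - ∑ i ∈ Finset.range M, z ^ i * (⇑τ)^[i] (lam j) / D i) = 0
      · rw [hval, mul_zero]; exact Or.inl rfl
      · right
        have h0 := (htail j (Finset.mem_range.1 hj)).resolve_left hval
        rw [hm _ _ (pow_ne_zero _ hz0) hval, v_pow hm hz0, hvz, mul_zero, zero_add]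
        exact h0
    have hPge : VGe v R (∑ n ∈ Finset.range (N + M), μ n * z ^ n) := by
      have hsub := vge_sub hm ha hexpS_ge htailsum
      have heq : (∑ n ∈ Finset.range (N + M), μ n * z ^ n) = expC S
          - ∑ j ∈ Finset.range N, z ^ j * (expC (lam j)
            - ∑ i ∈ Finset.range M, z ^ i * (⇑τ)^[i] (lam j) / D i) := by
        rw [hexpS_split]; ring
      rw [heq]
      exact hsub
    have hμge : ∀ n, n < N + M → VGe v R (μ n) := by
      rcases hPge with hP0 | hPv
      · intro n hn; exact Or.inl (hzero (N + M) μ hμE hP0 n hn)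
      · intro n hn
        by_cases h0 : μ n = 0
        · exact Or.inl h0
        · exact Or.inr (le_trans hPv (hGauss (N + M) μ hμE n hn h0))
    have hkey : ∀ j, j < N → VGe v R (lam j) := by
      intro j
      induction j using Nat.strong_induction_on with
      | _ j ih =>
        intro hj
        have hμj := hμge j (by omega)
        have hf0 : (if 0 ≤ j ∧ j - 0 < N then A (j - 0) 0 else 0) = lam j := by
          rw [if_pos ⟨Nat.zero_le j, by omega⟩, hAdef]
          dsimp only
          rw [Nat.sub_zero, pow_zero, pow_one, hD 0, Finset.prod_range_zero, div_one]
        have hform : μ j = (∑ i ∈ Finset.range M₀,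
            if (i+1) ≤ j ∧ j - (i+1) < N then A (j - (i+1)) (i+1) else 0) + lam j := by
          rw [hμdef]
          dsimp only
          rw [hMdef, Finset.sum_range_succ', hf0]
        have hlameq : lam j = μ j - ∑ i ∈ Finset.range M₀,
            (if (i+1) ≤ j ∧ j - (i+1) < N then A (j - (i+1)) (i+1) else 0) := by
          rw [hform]; ring
        rw [hlameq]
        apply vge_sub hm ha hμj
        apply vge_sum ha
        intro i _
        split_ifs with hcond
        · have hj' : j - (i+1) < j := by omega
          have hlamj' := ih (j - (i+1)) hj' (by omega)
          by_cases h0 : lam (j - (i+1)) = 0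
          · rw [hAdef]
            dsimp only
            rw [h0, zero_pow (pow_ne_zero _ hq0), zero_div]
            exact Or.inl rfl
          · right
            have hv' : R ≤ v (lam (j - (i+1))) := hlamj'.resolve_left h0
            rw [hAdef]
            dsimp only
            rw [v_div hm (pow_ne_zero _ h0) (hvD (i+1)).1, v_pow hm h0, (hvD (i+1)).2]
            push_cast
            have h1 : (1:ℚ) ≤ (q:ℚ)^(i+1) := one_le_pow₀ hqQ.le
            have h2 : (0:ℚ) ≤ v (lam (j - (i+1))) := le_trans hR0 hv'
            have h3 : v (lam (j - (i+1))) ≤ (q:ℚ)^(i+1) * v (lam (j - (i+1))) :=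
              le_mul_of_one_le_left h2 h1
            have h4 : (0:ℚ) ≤ ((i:ℚ)+1) * (q:ℚ)^(i+1) := by positivity
            nlinarith [hv']
        · exact Or.inl rfl
    have hfin : VGe v R S := by
      rw [hSdef]
      apply vge_sum ha
      intro j hj
      by_cases h0 : lam j = 0
      · rw [h0, zero_mul]; exact Or.inl rfl
      · right
        rw [hm _ _ h0 (pow_ne_zero _ hz0), v_pow hm hz0, hvz, mul_zero, add_zero]
        exact (hkey j (Finset.mem_range.1 hj)).resolve_left h0
    rcases hfin with h0 | h0
    · exact hSne h0
    · rw [hvS] at h0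
      linarith

  intro a b hab
  have h1 : expC (a - b) + expC b = expC a := by
    rw [← hexp_add, sub_add_cancel]
  have h2 : expC (a - b) = 0 := by
    rw [hab] at h1
    linear_combination h1
  have := hker (a - b) h2
  linear_combination this
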